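/- Let D be a distribution on X, π* and π̂ be conditional distributions (policies) mapping X to distributions on a countable set Y, and let σ(x) := supp π*(·|x). Then the loss L(π̂) := E_{x∼D} Pr_{ŷ∼π̂(·|x)}[ŷ ∉ σ(x)] satisfies L(π̂) ≤ D_H²(D × π*, D × π̂), where D × π denotes the joint distribution on X × Y with marginal D and conditional π. -/
import Mathlib


open Classical in
/-- The loss of any policy against the support of the demonstrator is bounded by the
squared Hellinger distance between the joint laws. -/
theorem stmt6 {X Y : Type*} [Countable X] [Countable Y]
    (D : X → ℝ) (hD : ∀ x, 0 ≤ D x) (hD1 : ∑' x, D x = 1)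
    (πs πh : X → Y → ℝ)
    (hπs0 : ∀ x y, 0 ≤ πs x y) (hπs1 : ∀ x, ∑' y, πs x y = 1)
    (hπh0 : ∀ x y, 0 ≤ πh x y) (hπh1 : ∀ x, ∑' y, πh x y = 1) :
    ∑' x, ∑' y, D x * πh x y * (if πs x y = 0 then 1 else 0)
      ≤ ∑' p : X × Y,
          (Real.sqrt (D p.1 * πs p.1 p.2) - Real.sqrt (D p.1 * πh p.1 p.2)) ^ 2 := by
  -- summability of D
  have hDsum : Summable D := by
    by_contra h
    rw [tsum_eq_zero_of_not_summable h] at hD1; norm_num at hD1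
  have hπhsum : ∀ x, Summable (πh x) := by
    intro x
    by_contra h
    have := hπh1 x
    rw [tsum_eq_zero_of_not_summable h] at this; norm_num at this
  have hπssum : ∀ x, Summable (πs x) := by
    intro x
    by_contra h
    have := hπs1 x
    rw [tsum_eq_zero_of_not_summable h] at this; norm_num at this
  -- summability of joint laws on the product
  have hjoint : ∀ (π : X → Y → ℝ), (∀ x y, 0 ≤ π x y) → (∀ x, ∑' y, π x y = 1) →
      (∀ x, Summable (π x)) → Summable (fun p : X × Y => D p.1 * π p.1 p.2) := by
    intro π h0 h1 hsum
    rw [summable_prod_of_nonneg (fun p => mul_nonneg (hD p.1) (h0 p.1 p.2))]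
    constructor
    · intro x; exact (hsum x).mul_left (D x)
    · simp only [tsum_mul_left, h1, mul_one]; exact hDsum
  have hjs := hjoint πs hπs0 hπs1 hπssum
  have hjh := hjoint πh hπh0 hπh1 hπhsum
  -- pointwise bound
  have hpt : ∀ p : X × Y, D p.1 * πh p.1 p.2 * (if πs p.1 p.2 = 0 then 1 else 0)
      ≤ (Real.sqrt (D p.1 * πs p.1 p.2) - Real.sqrt (D p.1 * πh p.1 p.2)) ^ 2 := by
    intro ⟨x, y⟩
    by_cases h : πs x y = 0
    · simp only [h, if_pos, mul_zero, Real.sqrt_zero, zero_sub, neg_sq, mul_one]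
      rw [Real.sq_sqrt (mul_nonneg (hD x) (hπh0 x y))]
    · simp only [h, if_neg, mul_zero, if_false]
      positivity
  -- LHS summable
  have hlhs : Summable (fun p : X × Y => D p.1 * πh p.1 p.2 *
      (if πs p.1 p.2 = 0 then 1 else 0)) := by
    apply Summable.of_nonneg_of_le (fun p => mul_nonneg (mul_nonneg (hD p.1) (hπh0 p.1 p.2)) (by split <;> norm_num)) (fun p => ?_) hjh
    by_cases h : πs p.1 p.2 = 0 <;>
      simp [h, mul_nonneg (hD p.1) (hπh0 p.1 p.2)]
  -- RHS summable : (√a - √b)² ≤ a + b  since ab ≥ 0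
  have hrhs : Summable (fun p : X × Y =>
      (Real.sqrt (D p.1 * πs p.1 p.2) - Real.sqrt (D p.1 * πh p.1 p.2)) ^ 2) := by
    apply Summable.of_nonneg_of_le (fun p => by positivity) (fun p => ?_) (hjs.add hjh)
    have ha : (0:ℝ) ≤ D p.1 * πs p.1 p.2 := mul_nonneg (hD p.1) (hπs0 p.1 p.2)
    have hb : (0:ℝ) ≤ D p.1 * πh p.1 p.2 := mul_nonneg (hD p.1) (hπh0 p.1 p.2)
    have h1 : Real.sqrt (D p.1 * πs p.1 p.2) ^ 2 = D p.1 * πs p.1 p.2 := Real.sq_sqrt ha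
    have h2 : Real.sqrt (D p.1 * πh p.1 p.2) ^ 2 = D p.1 * πh p.1 p.2 := Real.sq_sqrt hb
    have h3 : 0 ≤ Real.sqrt (D p.1 * πs p.1 p.2) * Real.sqrt (D p.1 * πh p.1 p.2) := by
      positivity
    nlinarith [h1, h2, h3]
  calc ∑' x, ∑' y, D x * πh x y * (if πs x y = 0 then 1 else 0)
      = ∑' p : X × Y, D p.1 * πh p.1 p.2 * (if πs p.1 p.2 = 0 then 1 else 0) :=
        (Summable.tsum_prod' hlhs (fun x => hlhs.prod_factor x)).symm
    _ ≤ _ := Summable.tsum_le_tsum hpt hlhs hrhs
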